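/- Let (X,Y,Z) : [η0,η1] → ℝ³ be a solution of the system (S) with X(η) > 0 for all η ∈ [η0,η1]. If Y(η0) < 0 and X(η0) < Z(η0), then Y(η) < 0 and X(η) < Z(η) for every η ∈ [η0,η1]. -/

import Mathlib

open Real Set Filter Topology

/-- The self-similar exponent `α = (σ+2)/((σ-2)(m-1))`. -/
noncomputable def ssAlpha (m σ : ℝ) : ℝ := (σ + 2) / ((σ - 2) * (m - 1))

/-- The self-similar exponent `β = 2/(σ-2)`. -/
noncomputable def ssBeta (σ : ℝ) : ℝ := 2 / (σ - 2)

/-- `(X,Y,Z)` satisfies the quadratic system (S) at time `η`: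
`X' = X((m−1)Y − 2X)`, `Y' = −Y² − (β/α)Y + X − XY − Z`, `Z' = (σ−2)XZ`. -/
def SysAt (m σ : ℝ) (X Y Z : ℝ → ℝ) (η : ℝ) : Prop :=
  HasDerivAt X (X η * ((m - 1) * Y η - 2 * X η)) η ∧
  HasDerivAt Y (-(Y η) ^ 2 - ssBeta σ / ssAlpha m σ * Y η + X η - X η * Y η - Z η) η ∧
  HasDerivAt Z ((σ - 2) * X η * Z η) η

/-- The equilibrium `P0^λ = (0, λ, −λ² − (β/α)λ)` on the critical parabola. -/
noncomputable def P0pt (m σ l : ℝ) : ℝ × ℝ × ℝ :=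
  (0, l, -l ^ 2 - ssBeta σ / ssAlpha m σ * l)

/-- The equilibrium `P2 = ((m−1)/(2(m+1)α), 1/((m+1)α), 0)`. -/
noncomputable def P2pt (m σ : ℝ) : ℝ × ℝ × ℝ :=
  ((m - 1) / (2 * (m + 1) * ssAlpha m σ), 1 / ((m + 1) * ssAlpha m σ), 0)


private lemma deriv_nonneg_of_max_right {f : ℝ → ℝ} {f' a τ : ℝ} (h : a < τ)
    (hd : HasDerivWithinAt f f' (Icc a τ) τ)
    (hle : ∀ s ∈ Ico a τ, f s ≤ f τ) : 0 ≤ f' := by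
  haveI : (𝓝[Ico a τ] τ).NeBot := by
    refine mem_closure_iff_nhdsWithin_neBot.mp ?_
    rw [closure_Ico h.ne]
    exact ⟨h.le, le_refl τ⟩
  rw [hasDerivWithinAt_iff_tendsto_slope, Icc_sdiff_right] at hd
  refine ge_of_tendsto hd ?_
  filter_upwards [eventually_mem_nhdsWithin] with s hs
  have h1 : f s - f τ ≤ 0 := sub_nonpos.mpr (hle s hs)
  have h2 : s - τ < 0 := sub_neg.mpr hs.2
  rw [slope_def_field]
  exact div_nonneg_iff.mpr (Or.inr ⟨h1, h2.le⟩)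

/-- along a solution of (S) with `X > 0`, the conditions `Y < 0` and
`X < Z` are preserved forward in time. -/
theorem Y_neg_and_X_lt_Z_invariant
    (m σ : ℝ) (hm1 : 1 < m) (hm2 : m < 2) (hσ : 2 < σ)
    (η0 η1 : ℝ) (hη : η0 ≤ η1) (X Y Z : ℝ → ℝ)
    (hsol : ∀ η ∈ Icc η0 η1,
      HasDerivWithinAt X (X η * ((m - 1) * Y η - 2 * X η)) (Icc η0 η1) η ∧
      HasDerivWithinAt Y
        (-(Y η) ^ 2 - ssBeta σ / ssAlpha m σ * Y η + X η - X η * Y η - Z η)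
        (Icc η0 η1) η ∧
      HasDerivWithinAt Z ((σ - 2) * X η * Z η) (Icc η0 η1) η)
    (hX : ∀ η ∈ Icc η0 η1, 0 < X η)
    (hY0 : Y η0 < 0) (hXZ0 : X η0 < Z η0) :
    ∀ η ∈ Icc η0 η1, Y η < 0 ∧ X η < Z η := by
  by_contra hcon
  push_neg at hcon
  obtain ⟨t, ht, hbad⟩ := hcon
  -- the "bad" set
  set B : Set ℝ := {s | s ∈ Icc η0 η1 ∧ (0 ≤ Y s ∨ Z s ≤ X s)} with hBdef
  have hBne : B.Nonempty := by
    refine ⟨t, ht, ?_⟩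
    rcases le_or_gt 0 (Y t) with h | h
    · exact Or.inl h
    · exact Or.inr (hbad h)
  have hBdd : BddBelow B := ⟨η0, fun b hb => hb.1.1⟩
  set τ : ℝ := sInf B with hτdef
  obtain ⟨b0, hb0⟩ := hBne
  have hτmem : τ ∈ Icc η0 η1 :=
    ⟨le_csInf ⟨b0, hb0⟩ fun b hb => hb.1.1, le_trans (csInf_le hBdd hb0) hb0.1.2⟩
  have hgood : ∀ s, η0 ≤ s → s < τ → Y s < 0 ∧ X s < Z s := by
    intro s hs1 hs2
    by_contra hc
    push_neg at hc
    have hsI : s ∈ Icc η0 η1 := ⟨hs1, le_trans hs2.le hτmem.2⟩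
    have hsB : s ∈ B := by
      refine ⟨hsI, ?_⟩
      rcases le_or_gt 0 (Y s) with h | h
      · exact Or.inl h
      · exact Or.inr (hc h)
    exact absurd (csInf_le hBdd hsB) (not_le.mpr hs2)
  have hXτ : 0 < X τ := hX τ hτmem
  have hYc : ContinuousWithinAt Y (Icc η0 η1) τ := (hsol τ hτmem).2.1.continuousWithinAt
  have hXc : ContinuousWithinAt X (Icc η0 η1) τ := (hsol τ hτmem).1.continuousWithinAt
  have hZc : ContinuousWithinAt Z (Icc η0 η1) τ := (hsol τ hτmem).2.2.continuousWithinAt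
  by_cases hA : Y τ < 0 ∧ X τ < Z τ
  · -- τ itself is good; get a right neighborhood of good points, contradicting τ = sInf B
    have hev : ∀ᶠ s in 𝓝[Icc η0 η1] τ, Y s < 0 ∧ X s < Z s := by
      have h1 : ∀ᶠ s in 𝓝[Icc η0 η1] τ, Y s < 0 := hYc (Iio_mem_nhds hA.1)
      have h2 : ∀ᶠ s in 𝓝[Icc η0 η1] τ, 0 < Z s - X s :=
        (hZc.sub hXc) (Ioi_mem_nhds (sub_pos.mpr hA.2))
      filter_upwards [h1, h2] with s hs1 hs2
      exact ⟨hs1, by linarith⟩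
    haveI hNB' : (𝓝[B] τ).NeBot :=
      mem_closure_iff_nhdsWithin_neBot.mp (csInf_mem_closure ⟨b0, hb0⟩ hBdd)
    have hBsub : B ⊆ Icc η0 η1 := fun b hb => hb.1
    have hev' : ∀ᶠ s in 𝓝[B] τ, (Y s < 0 ∧ X s < Z s) ∧ s ∈ B :=
      (hev.filter_mono (nhdsWithin_mono τ hBsub)).and eventually_mem_nhdsWithin
    obtain ⟨b, hg, hbB⟩ := hev'.exists
    rcases hbB.2 with h | h
    · exact absurd hg.1 (not_lt.mpr h)
    · exact absurd hg.2 (not_lt.mpr h)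
  · push_neg at hA
    have hτgt : η0 < τ := by
      rcases eq_or_lt_of_le hτmem.1 with h | h
      · exact absurd (hA (h ▸ hY0)) (not_le.mpr (h ▸ hXZ0))
      · exact h
    -- left limits: Y τ ≤ 0 and X τ ≤ Z τ
    haveI hNB : (𝓝[Ico η0 τ] τ).NeBot := by
      refine mem_closure_iff_nhdsWithin_neBot.mp ?_
      rw [closure_Ico hτgt.ne]
      exact ⟨hτgt.le, le_refl τ⟩
    have hsubI : Ico η0 τ ⊆ Icc η0 η1 := fun s hs => ⟨hs.1, le_trans hs.2.le hτmem.2⟩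
    have hYle : Y τ ≤ 0 := by
      refine le_of_tendsto (hYc.mono_left (nhdsWithin_mono τ hsubI)) ?_
      filter_upwards [eventually_mem_nhdsWithin] with s hs
      exact (hgood s hs.1 hs.2).1.le
    have hXZle : X τ ≤ Z τ := by
      have : Tendsto (fun s => Z s - X s) (𝓝[Ico η0 τ] τ) (𝓝 (Z τ - X τ)) :=
        (hZc.sub hXc).mono_left (nhdsWithin_mono τ hsubI)
      have h0 : 0 ≤ Z τ - X τ := by
        refine ge_of_tendsto this ?_
        filter_upwards [eventually_mem_nhdsWithin] with s hs
        exact le_of_lt (sub_pos.mpr (hgood s hs.1 hs.2).2)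
      linarith
    have hIccsub : Icc η0 τ ⊆ Icc η0 η1 := Icc_subset_Icc_right hτmem.2
    rcases eq_or_lt_of_le hXZle with hEq | hLt
    · -- X τ = Z τ : consider f = X - Z, max at τ over [η0, τ], but f' (τ) < 0
      have hd : HasDerivWithinAt (fun s => X s - Z s)
          (X τ * ((m - 1) * Y τ - 2 * X τ) - (σ - 2) * X τ * Z τ) (Icc η0 τ) τ :=
        ((hsol τ hτmem).1.sub (hsol τ hτmem).2.2).mono hIccsub
      have hle : ∀ s ∈ Ico η0 τ, X s - Z s ≤ X τ - Z τ := by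
        intro s hs
        have := (hgood s hs.1 hs.2).2
        rw [← hEq]
        linarith
      have h0 := deriv_nonneg_of_max_right hτgt hd hle
      have hmY : (m - 1) * Y τ ≤ 0 :=
        mul_nonpos_of_nonneg_of_nonpos (by linarith) hYle
      rw [← hEq] at h0
      nlinarith [mul_pos hXτ hXτ, mul_nonneg hXτ.le (neg_nonneg.mpr hmY),
        mul_pos (sub_pos.mpr hσ) (mul_pos hXτ hXτ)]
    · -- X τ < Z τ, hence Y τ = 0; consider f = Y, max at τ, but Y'(τ) = X τ - Z τ < 0
      have hY0' : Y τ = 0 := by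
        rcases eq_or_lt_of_le hYle with h | h
        · exact h
        · exact absurd (hA h) (not_le.mpr hLt)
      have hd : HasDerivWithinAt Y
          (-(Y τ) ^ 2 - ssBeta σ / ssAlpha m σ * Y τ + X τ - X τ * Y τ - Z τ)
          (Icc η0 τ) τ := (hsol τ hτmem).2.1.mono hIccsub
      have hle : ∀ s ∈ Ico η0 τ, Y s ≤ Y τ := by
        intro s hs
        rw [hY0']
        exact (hgood s hs.1 hs.2).1.le
      have h0 := deriv_nonneg_of_max_right hτgt hd hle
      rw [hY0'] at h0
      simp at h0
      linarith
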